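/- Let N(n,k) := (1/n)·C(n,k)·C(n,k+1) denote the Narayana numbers. For all integers n ≥ 1 and 0 ≤ d ≤ n−1: Σ_{k=0}^{n−1} N(n,k)·C(k,d) = (1/(n+1))·C(2n−d, n)·C(n−1, d). -/

import Mathlib

open Finset

lemma stmt_7_key (n d : ℕ) (hn : 1 ≤ n) (hd : d ≤ n - 1) :
    (∑ k ∈ Finset.range n, n.choose k * n.choose (k + 1) * k.choose d) * (n + 1)
      = ((2 * n - d).choose n * (n - 1).choose d) * n := by
  have hdn : d < n := by omega
  -- Step 1: restrict the sum to Ico d n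
  have h1 : ∑ k ∈ Finset.range n, n.choose k * n.choose (k + 1) * k.choose d
      = ∑ k ∈ Finset.Ico d n, n.choose k * n.choose (k + 1) * k.choose d := by
    refine (Finset.sum_subset ?_ ?_).symm
    · intro x hx
      simp only [Finset.mem_Ico, Finset.mem_range] at *
      omega
    · intro x hx hx'
      simp only [Finset.mem_Ico, Finset.mem_range] at *
      have : x < d := by omega
      rw [Nat.choose_eq_zero_of_lt this, Nat.mul_zero]
  -- Step 2: reindex
  have h2 : ∑ k ∈ Finset.Ico d n, n.choose k * n.choose (k + 1) * k.choose d
      = ∑ j ∈ Finset.range (n - d), n.choose (d + j) * n.choose (d + j + 1) * (d + j).choose d := by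
    rw [Finset.sum_Ico_eq_sum_range]
  -- Step 3: rewrite each term
  have h3 : ∀ j ∈ Finset.range (n - d),
      n.choose (d + j) * n.choose (d + j + 1) * (d + j).choose d
      = n.choose d * ((n - d).choose j * n.choose (d + j + 1)) := by
    intro j hj
    rw [Finset.mem_range] at hj
    have hdjn : d + j ≤ n := by omega
    have := Nat.choose_mul (n := n) (k := d + j) (s := d) (Nat.le_add_right d j)
    have hsub : d + j - d = j := by omega
    rw [hsub] at this
    calc n.choose (d + j) * n.choose (d + j + 1) * (d + j).choose d
        = n.choose (d + j) * (d + j).choose d * n.choose (d + j + 1) := by ring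
      _ = n.choose d * (n - d).choose j * n.choose (d + j + 1) := by rw [this]
      _ = n.choose d * ((n - d).choose j * n.choose (d + j + 1)) := by ring
  -- Step 4: symmetry
  have h4 : ∀ j ∈ Finset.range (n - d),
      (n - d).choose j * n.choose (d + j + 1)
      = (n - d).choose j * n.choose (n - d - 1 - j) := by
    intro j hj
    rw [Finset.mem_range] at hj
    have h : d + j + 1 ≤ n := by omega
    have := Nat.choose_symm h
    have heq : n - (d + j + 1) = n - d - 1 - j := by omega
    rw [heq] at this
    rw [← this]
  -- Step 5: Vandermonde
  have h5 : ∑ j ∈ Finset.range (n - d), (n - d).choose j * n.choose (n - d - 1 - j)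
      = (2 * n - d).choose (n - d - 1) := by
    have hm : 2 * n - d = (n - d) + n := by omega
    rw [hm, Nat.add_choose_eq,
      Finset.Nat.sum_antidiagonal_eq_sum_range_succ_mk]
    have : n - d - 1 + 1 = n - d := by omega
    rw [Nat.succ_eq_add_one, this]
  -- combine
  have hsum : ∑ k ∈ Finset.range n, n.choose k * n.choose (k + 1) * k.choose d
      = n.choose d * (2 * n - d).choose (n - d - 1) := by
    rw [h1, h2, Finset.sum_congr rfl h3, ← Finset.mul_sum,
      Finset.sum_congr rfl h4, h5]
  rw [hsum]
  -- Step 6: numeric identities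
  have hsymm : (2 * n - d).choose (n - d - 1) = (2 * n - d).choose (n + 1) := by
    have h : n + 1 ≤ 2 * n - d := by omega
    have := Nat.choose_symm h
    have heq : 2 * n - d - (n + 1) = n - d - 1 := by omega
    rw [heq] at this
    rw [← this]
  have hA : (2 * n - d).choose (n + 1) * (n + 1) = (2 * n - d).choose n * (n - d) := by
    have := Nat.choose_succ_right_eq (2 * n - d) n
    have heq : 2 * n - d - n = n - d := by omega
    rw [heq] at this
    exact this
  have hB : n.choose d * (n - d) = n * (n - 1).choose d := by
    have h1' := Nat.choose_succ_right_eq n d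
    have h2' : Nat.succ (n - 1) * (n - 1).choose d = (Nat.succ (n - 1)).choose (Nat.succ d) * Nat.succ d :=
      Nat.add_one_mul_choose_eq (n - 1) d
    have hs : Nat.succ (n - 1) = n := by omega
    rw [hs] at h2'
    simp only [Nat.succ_eq_add_one] at h2'
    omega
  calc n.choose d * (2 * n - d).choose (n - d - 1) * (n + 1)
      = n.choose d * ((2 * n - d).choose (n + 1) * (n + 1)) := by rw [hsymm]; ring
    _ = n.choose d * ((2 * n - d).choose n * (n - d)) := by rw [hA]
    _ = (n.choose d * (n - d)) * (2 * n - d).choose n := by ring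
    _ = (n * (n - 1).choose d) * (2 * n - d).choose n := by rw [hB]
    _ = ((2 * n - d).choose n * (n - 1).choose d) * n := by ring

theorem stmt_7 (n d : ℕ) (hn : 1 ≤ n) (hd : d ≤ n - 1) :
    ∑ k ∈ Finset.range n,
        ((1 : ℚ) / n * (n.choose k : ℚ) * (n.choose (k + 1) : ℚ)) * (k.choose d : ℚ) =
    (1 : ℚ) / (n + 1) * ((2 * n - d).choose n : ℚ) * ((n - 1).choose d : ℚ) := by
  have key := stmt_7_key n d hn hd
  have hn0 : (n : ℚ) ≠ 0 := by positivity
  have hn1 : (n : ℚ) + 1 ≠ 0 := by positivity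
  have hS : ∑ k ∈ Finset.range n,
      ((1 : ℚ) / n * (n.choose k : ℚ) * (n.choose (k + 1) : ℚ)) * (k.choose d : ℚ)
      = ((∑ k ∈ Finset.range n, n.choose k * n.choose (k + 1) * k.choose d : ℕ) : ℚ) / n := by
    push_cast
    rw [Finset.sum_div]
    refine Finset.sum_congr rfl fun k _ => ?_
    field_simp
  rw [hS, div_eq_iff hn0,
    show (1:ℚ)/((n:ℚ)+1) * ((2 * n - d).choose n : ℚ) * ((n - 1).choose d : ℚ) * (n:ℚ)
      = ((2 * n - d).choose n : ℚ) * ((n - 1).choose d : ℚ) * (n:ℚ) / ((n:ℚ)+1) by ring,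
    eq_div_iff hn1]
  have keyQ : ((∑ k ∈ Finset.range n, n.choose k * n.choose (k + 1) * k.choose d : ℕ) : ℚ)
      * ((n : ℚ) + 1)
      = ((2 * n - d).choose n : ℚ) * ((n - 1).choose d : ℚ) * (n : ℚ) := by
    exact_mod_cast congrArg (Nat.cast : ℕ → ℚ) key
  linarith [keyQ]
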